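/- In a plane graph with no 4-cycles and no 6-cycles, no 5-face is adjacent to a 3-face (i.e., no face of length 5 shares an edge with a face of length 3 when both faces are bounded by cycles). -/

import Mathlib

/-- A matching assignment for a graph `G` with list assignment `L`:
for each edge `uv`, a (possibly empty) matching between `{u} × L u` and `{v} × L v`. -/
structure MatchingAssignment {V : Type} (G : SimpleGraph V) (L : V → Finset ℕ) where
  M : V → ℕ → V → ℕ → Prop
  symm : ∀ u i v j, M u i v j → M v j u i
  adj : ∀ u i v j, M u i v j → G.Adj u v
  mem_left : ∀ u i v j, M u i v j → i ∈ L u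
  mem_right : ∀ u i v j, M u i v j → j ∈ L v
  right_unique : ∀ u i v j j', M u i v j → M u i v j' → j = j'
  left_unique : ∀ u i i' v j, M u i v j → M u i' v j → i = i'

/-- The cover graph `G_L`: each fiber `{v} × L v` is a clique, and between fibers of
adjacent vertices the edges are exactly those of the matching. -/
def coverGraph {V : Type} (G : SimpleGraph V) (L : V → Finset ℕ)
    (MA : MatchingAssignment G L) : SimpleGraph (V × ℕ) where
  Adj p q := (p.1 = q.1 ∧ p.2 ≠ q.2 ∧ p.2 ∈ L p.1 ∧ q.2 ∈ L q.1) ∨ MA.M p.1 p.2 q.1 q.2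
  symm := by
    constructor
    rintro p q (⟨h1, h2, h3, h4⟩ | h)
    · exact Or.inl ⟨h1.symm, fun h' => h2 h'.symm, h4, h3⟩
    · exact Or.inr (MA.symm _ _ _ _ h)
  loopless := by
    constructor
    rintro p (⟨h1, h2, h3, h4⟩ | h)
    · exact h2 rfl
    · exact (MA.adj _ _ _ _ h).ne rfl

/-- An independent set in a simple graph. -/
def SimpleGraph.IsIndepSetOld {α : Type} (H : SimpleGraph α) (I : Set α) : Prop :=
  ∀ p ∈ I, ∀ q ∈ I, ¬ H.Adj p q

/-- `G` is DP-`k`-colorable: for every list assignment with lists of size `k` and every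
matching assignment, the cover graph contains an independent set of size `|V(G)|`
(with all its vertices in the fibers). -/
def DPColorable {V : Type} [Fintype V] [DecidableEq V] (G : SimpleGraph V) (k : ℕ) : Prop :=
  ∀ L : V → Finset ℕ, (∀ v, (L v).card = k) → ∀ MA : MatchingAssignment G L,
    ∃ I : Finset (V × ℕ), I.card = Fintype.card V ∧ (∀ p ∈ I, p.2 ∈ L p.1) ∧
      (coverGraph G L MA).IsIndepSetOld ↑I

/-- The DP-chromatic number. -/
noncomputable def dpChromaticNumber {V : Type} [Fintype V] [DecidableEq V]
    (G : SimpleGraph V) : ℕ :=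
  sInf {k | DPColorable G k}

/-- `G` is `k`-choosable. -/
def Choosable {V : Type} (G : SimpleGraph V) (k : ℕ) : Prop :=
  ∀ L : V → Finset ℕ, (∀ v, k ≤ (L v).card) →
    ∃ c : V → ℕ, (∀ v, c v ∈ L v) ∧ ∀ u v, G.Adj u v → c u ≠ c v

/-- The list chromatic number. -/
noncomputable def listChromaticNumber {V : Type} (G : SimpleGraph V) : ℕ :=
  sInf {k | Choosable G k}


lemma cyc4 {V : Type} {G : SimpleGraph V} {p q r s : V}
    (h1 : G.Adj p q) (h2 : G.Adj q r) (h3 : G.Adj r s) (h4 : G.Adj s p)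
    (hpq : p ≠ q) (hpr : p ≠ r) (hps : p ≠ s) (hqr : q ≠ r) (hqs : q ≠ s) (hrs : r ≠ s) :
    ∃ wk : G.Walk p p, wk.IsCycle ∧ wk.length = 4 := by
  refine ⟨.cons h1 (.cons h2 (.cons h3 (.cons h4 .nil))), ?_, rfl⟩
  simp [SimpleGraph.Walk.isCycle_def, SimpleGraph.Walk.isTrail_def, List.Nodup, Sym2.eq_iff]
  aesop

lemma cyc6 {V : Type} {G : SimpleGraph V} {p q r s t u : V}
    (h1 : G.Adj p q) (h2 : G.Adj q r) (h3 : G.Adj r s) (h4 : G.Adj s t)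
    (h5 : G.Adj t u) (h6 : G.Adj u p)
    (d1 : p ≠ q) (d2 : p ≠ r) (d3 : p ≠ s) (d4 : p ≠ t) (d5 : p ≠ u)
    (d6 : q ≠ r) (d7 : q ≠ s) (d8 : q ≠ t) (d9 : q ≠ u)
    (d10 : r ≠ s) (d11 : r ≠ t) (d12 : r ≠ u)
    (d13 : s ≠ t) (d14 : s ≠ u) (d15 : t ≠ u) :
    ∃ wk : G.Walk p p, wk.IsCycle ∧ wk.length = 6 := by
  refine ⟨.cons h1 (.cons h2 (.cons h3 (.cons h4 (.cons h5 (.cons h6 .nil))))), ?_, rfl⟩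
  simp [SimpleGraph.Walk.isCycle_def, SimpleGraph.Walk.isTrail_def, List.Nodup, Sym2.eq_iff]
  aesop

/-- Key: a triangle u v w sharing edge uv with a 5-cycle u x1 x2 x3 v
forces a 4-cycle or a 6-cycle. -/
lemma key {V : Type} {G : SimpleGraph V}
    (h4 : ∀ (v : V) (wk : G.Walk v v), wk.IsCycle → wk.length ≠ 4)
    (h6 : ∀ (v : V) (wk : G.Walk v v), wk.IsCycle → wk.length ≠ 6)
    {u v w x1 x2 x3 : V}
    (huv : G.Adj u v) (hvw : G.Adj v w) (hwu : G.Adj w u)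
    (hux1 : G.Adj u x1) (h12 : G.Adj x1 x2) (h23 : G.Adj x2 x3) (h3v : G.Adj x3 v)
    (duv : u ≠ v) (du1 : u ≠ x1) (du2 : u ≠ x2) (du3 : u ≠ x3)
    (dv1 : v ≠ x1) (dv2 : v ≠ x2) (dv3 : v ≠ x3)
    (d12 : x1 ≠ x2) (d13 : x1 ≠ x3) (d23 : x2 ≠ x3)
    (dwu : w ≠ u) (dwv : w ≠ v) : False := by
  by_cases e1 : w = x1
  · subst e1
    obtain ⟨wk, hc, hl⟩ := cyc4 hvw h12 h23 h3v dwv.symm dv2 dv3 d12 d13 d23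
    exact h4 _ wk hc hl
  · by_cases e2 : w = x2
    · subst e2
      obtain ⟨wk, hc, hl⟩ := cyc4 huv h3v.symm h23.symm hwu duv du3 du2 dv3 dv2 d23.symm
      exact h4 _ wk hc hl
    · by_cases e3 : w = x3
      · subst e3
        obtain ⟨wk, hc, hl⟩ := cyc4 hux1 h12 h23 hwu du1 du2 du3 d12 d13 d23
        exact h4 _ wk hc hl
      · obtain ⟨wk, hc, hl⟩ := cyc6 hux1 h12 h23 h3v hvw hwu
          du1 du2 du3 duv dwu.symm d12 d13 dv1.symm (fun h => e1 h.symm)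
          d23 dv2.symm (fun h => e2 h.symm) dv3.symm (fun h => e3 h.symm) dwv.symm
        exact h6 _ wk hc hl

/-- in a graph with no 4-cycles and no 6-cycles, a 5-cycle and a
3-cycle cannot share an edge (so no 5-face is adjacent to a 3-face). -/
theorem stmt_17 {V : Type} (G : SimpleGraph V)
    (h4 : ∀ (v : V) (wk : G.Walk v v), wk.IsCycle → wk.length ≠ 4)
    (h6 : ∀ (v : V) (wk : G.Walk v v), wk.IsCycle → wk.length ≠ 6)
    (a b : V) (w5 : G.Walk a a) (hw5 : w5.IsCycle) (hl5 : w5.length = 5)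
    (w3 : G.Walk b b) (hw3 : w3.IsCycle) (hl3 : w3.length = 3)
    (e : Sym2 V) : ¬ (e ∈ w5.edges ∧ e ∈ w3.edges) := by
  rintro ⟨he5, he3⟩
  cases w5 with
  | nil => simp at hl5
  | @cons _ p1 _ ha1 w5 =>
  cases w5 with
  | nil => simp at hl5
  | @cons _ p2 _ ha2 w5 =>
  cases w5 with
  | nil => simp at hl5
  | @cons _ p3 _ ha3 w5 =>
  cases w5 with
  | nil => simp at hl5
  | @cons _ p4 _ ha4 w5 =>
  cases w5 with
  | nil => simp at hl5
  | @cons _ p5 _ ha5 w5 =>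
  cases w5 with
  | cons h w => simp at hl5
  | nil =>
  cases w3 with
  | nil => simp at hl3
  | @cons _ q1 _ gb1 w3 =>
  cases w3 with
  | nil => simp at hl3
  | @cons _ q2 _ gb2 w3 =>
  cases w3 with
  | nil => simp at hl3
  | @cons _ q3 _ gb3 w3 =>
  cases w3 with
  | cons h w => simp at hl3
  | nil =>
  simp [SimpleGraph.Walk.isCycle_def] at hw5 hw3
  simp at he5 he3
  obtain ⟨-, ⟨n12, n13, n14, n1a⟩, ⟨n23, n24, n2a⟩, ⟨n34, n3a⟩, n4a⟩ := hw5
  obtain ⟨-, ⟨m12, m1b⟩, m2b⟩ := hw3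
  rcases he5 with rfl | rfl | rfl | rfl | rfl <;>
    rcases he3 with h | h | h <;>
    rcases Sym2.eq_iff.mp h with ⟨rfl, rfl⟩ | ⟨rfl, rfl⟩
  · apply key h4 h6 ha1 gb2 gb3 ha5.symm ha4.symm ha3.symm ha2.symm <;>
      first | assumption | (apply Ne.symm; assumption)
  · apply key h4 h6 ha1 gb3.symm gb2.symm ha5.symm ha4.symm ha3.symm ha2.symm <;>
      first | assumption | (apply Ne.symm; assumption)
  · apply key h4 h6 ha1 gb3 gb1 ha5.symm ha4.symm ha3.symm ha2.symm <;>
      first | assumption | (apply Ne.symm; assumption)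
  · apply key h4 h6 ha1 gb1.symm gb3.symm ha5.symm ha4.symm ha3.symm ha2.symm <;>
      first | assumption | (apply Ne.symm; assumption)
  · apply key h4 h6 ha1 gb1 gb2 ha5.symm ha4.symm ha3.symm ha2.symm <;>
      first | assumption | (apply Ne.symm; assumption)
  · apply key h4 h6 ha1 gb2.symm gb1.symm ha5.symm ha4.symm ha3.symm ha2.symm <;>
      first | assumption | (apply Ne.symm; assumption)
  · apply key h4 h6 ha2 gb2 gb3 ha1.symm ha5.symm ha4.symm ha3.symm <;>
      first | assumption | (apply Ne.symm; assumption)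
  · apply key h4 h6 ha2 gb3.symm gb2.symm ha1.symm ha5.symm ha4.symm ha3.symm <;>
      first | assumption | (apply Ne.symm; assumption)
  · apply key h4 h6 ha2 gb3 gb1 ha1.symm ha5.symm ha4.symm ha3.symm <;>
      first | assumption | (apply Ne.symm; assumption)
  · apply key h4 h6 ha2 gb1.symm gb3.symm ha1.symm ha5.symm ha4.symm ha3.symm <;>
      first | assumption | (apply Ne.symm; assumption)
  · apply key h4 h6 ha2 gb1 gb2 ha1.symm ha5.symm ha4.symm ha3.symm <;>
      first | assumption | (apply Ne.symm; assumption)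
  · apply key h4 h6 ha2 gb2.symm gb1.symm ha1.symm ha5.symm ha4.symm ha3.symm <;>
      first | assumption | (apply Ne.symm; assumption)
  · apply key h4 h6 ha3 gb2 gb3 ha2.symm ha1.symm ha5.symm ha4.symm <;>
      first | assumption | (apply Ne.symm; assumption)
  · apply key h4 h6 ha3 gb3.symm gb2.symm ha2.symm ha1.symm ha5.symm ha4.symm <;>
      first | assumption | (apply Ne.symm; assumption)
  · apply key h4 h6 ha3 gb3 gb1 ha2.symm ha1.symm ha5.symm ha4.symm <;>
      first | assumption | (apply Ne.symm; assumption)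
  · apply key h4 h6 ha3 gb1.symm gb3.symm ha2.symm ha1.symm ha5.symm ha4.symm <;>
      first | assumption | (apply Ne.symm; assumption)
  · apply key h4 h6 ha3 gb1 gb2 ha2.symm ha1.symm ha5.symm ha4.symm <;>
      first | assumption | (apply Ne.symm; assumption)
  · apply key h4 h6 ha3 gb2.symm gb1.symm ha2.symm ha1.symm ha5.symm ha4.symm <;>
      first | assumption | (apply Ne.symm; assumption)
  · apply key h4 h6 ha4 gb2 gb3 ha3.symm ha2.symm ha1.symm ha5.symm <;>
      first | assumption | (apply Ne.symm; assumption)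
  · apply key h4 h6 ha4 gb3.symm gb2.symm ha3.symm ha2.symm ha1.symm ha5.symm <;>
      first | assumption | (apply Ne.symm; assumption)
  · apply key h4 h6 ha4 gb3 gb1 ha3.symm ha2.symm ha1.symm ha5.symm <;>
      first | assumption | (apply Ne.symm; assumption)
  · apply key h4 h6 ha4 gb1.symm gb3.symm ha3.symm ha2.symm ha1.symm ha5.symm <;>
      first | assumption | (apply Ne.symm; assumption)
  · apply key h4 h6 ha4 gb1 gb2 ha3.symm ha2.symm ha1.symm ha5.symm <;>
      first | assumption | (apply Ne.symm; assumption)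
  · apply key h4 h6 ha4 gb2.symm gb1.symm ha3.symm ha2.symm ha1.symm ha5.symm <;>
      first | assumption | (apply Ne.symm; assumption)
  · apply key h4 h6 ha5 gb2 gb3 ha4.symm ha3.symm ha2.symm ha1.symm <;>
      first | assumption | (apply Ne.symm; assumption)
  · apply key h4 h6 ha5 gb3.symm gb2.symm ha4.symm ha3.symm ha2.symm ha1.symm <;>
      first | assumption | (apply Ne.symm; assumption)
  · apply key h4 h6 ha5 gb3 gb1 ha4.symm ha3.symm ha2.symm ha1.symm <;>
      first | assumption | (apply Ne.symm; assumption)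
  · apply key h4 h6 ha5 gb1.symm gb3.symm ha4.symm ha3.symm ha2.symm ha1.symm <;>
      first | assumption | (apply Ne.symm; assumption)
  · apply key h4 h6 ha5 gb1 gb2 ha4.symm ha3.symm ha2.symm ha1.symm <;>
      first | assumption | (apply Ne.symm; assumption)
  · apply key h4 h6 ha5 gb2.symm gb1.symm ha4.symm ha3.symm ha2.symm ha1.symm <;>
      first | assumption | (apply Ne.symm; assumption)
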